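/- Let d ≥ 1, let a : Fin d → ℚ be a nonincreasing nonnegative sequence, and let L be a composition of d. Then the sequence v(L,a) is nonincreasing and nonnegative, it has the same weight as a (|v(L,a)| = |a|), and it is dominated by a: v(L,a) 0 + … + v(L,a) n ≤ a 0 + … + a n for every n < d. -/

import Mathlib

open Finset

/-- `vSeq L a` is the sequence `v(L,a)` of length `d`: it is constant on each block of the
composition `L` of `d`, and its value on block `i` is the average of `a` over that block,
i.e. (sum of `a` over block `i`) divided by the length `lᵢ` of block `i`. -/
noncomputable def vSeq {d : ℕ} (L : Composition d) (a : Fin d → ℚ) : Fin d → ℚ :=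
  fun i => (∑ j : Fin d, if L.index j = L.index i then a j else 0) / (L.blocksFun (L.index i) : ℚ)

namespace VSeqAux

variable {d : ℕ} (L : Composition d) (a : Fin d → ℚ)

/-- The fiber of the index map over `k`. -/
def F (k : Fin L.length) : Finset (Fin d) :=
  Finset.univ.filter (fun j => L.index j = k)

lemma mem_F {k : Fin L.length} {j : Fin d} : j ∈ F L k ↔ L.index j = k := by
  simp [F]

lemma vSeq_eq (i : Fin d) :
    vSeq L a i = (∑ j ∈ F L (L.index i), a j) / (L.blocksFun (L.index i) : ℚ) := by
  rw [vSeq, ← Finset.sum_filter]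
  rfl

lemma F_eq_map (k : Fin L.length) :
    F L k = Finset.map (L.embedding k).toEmbedding Finset.univ := by
  ext j
  simp only [mem_F, Finset.mem_map, Finset.mem_univ, true_and]
  constructor
  · intro h
    have : j ∈ Set.range (L.embedding k) := by
      rw [Composition.mem_range_embedding_iff']
      exact h.symm
    obtain ⟨x, hx⟩ := this
    exact ⟨x, hx⟩
  · rintro ⟨x, rfl⟩
    exact L.index_embedding k x

lemma card_F (k : Fin L.length) : (F L k).card = L.blocksFun k := by
  rw [F_eq_map]
  simp

lemma blocksFun_pos (k : Fin L.length) : (0 : ℚ) < (L.blocksFun k : ℚ) := by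
  exact_mod_cast L.one_le_blocksFun k

lemma lt_of_index_lt {p q : Fin d} (h : L.index p < L.index q) : p < q := by
  have h1 : (p : ℕ) < L.sizeUpTo ((L.index p : ℕ) + 1) := L.lt_sizeUpTo_index_succ p
  have h2 : L.sizeUpTo ((L.index p : ℕ) + 1) ≤ L.sizeUpTo (L.index q) :=
    L.monotone_sizeUpTo h
  have h3 : L.sizeUpTo (L.index q) ≤ (q : ℕ) := L.sizeUpTo_index_le q
  exact Fin.lt_def.2 (lt_of_lt_of_le h1 (le_trans h2 h3))

lemma index_mono {p q : Fin d} (h : p ≤ q) : L.index p ≤ L.index q := by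
  by_contra hc
  exact absurd h (not_le.2 (lt_of_index_lt L (lt_of_not_ge hc)))

/-- Cross inequality: if every element of `S` dominates every element of `T`. -/
lemma cross (S T : Finset (Fin d)) (h : ∀ p ∈ S, ∀ q ∈ T, a q ≤ a p) :
    (S.card : ℚ) * ∑ q ∈ T, a q ≤ (T.card : ℚ) * ∑ p ∈ S, a p := by
  have h1 : (S.card : ℚ) * ∑ q ∈ T, a q = ∑ p ∈ S, ∑ q ∈ T, a q := by
    rw [Finset.sum_const, nsmul_eq_mul]
  have h2 : (T.card : ℚ) * ∑ p ∈ S, a p = ∑ p ∈ S, ∑ q ∈ T, a p := by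
    rw [Finset.mul_sum]
    congr 1; ext p
    rw [Finset.sum_const, nsmul_eq_mul]
  rw [h1, h2]
  exact Finset.sum_le_sum fun p hp => Finset.sum_le_sum fun q hq => h p hp q hq

lemma sum_F_vSeq (k : Fin L.length) :
    ∑ j ∈ F L k, vSeq L a j = ∑ j ∈ F L k, a j := by
  have hconst : ∀ j ∈ F L k, vSeq L a j = (∑ j ∈ F L k, a j) / (L.blocksFun k : ℚ) := by
    intro j hj
    have hj' := (mem_F L).1 hj
    rw [vSeq_eq, hj']
  rw [Finset.sum_congr rfl hconst, Finset.sum_const, card_F, nsmul_eq_mul,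
    mul_div_cancel₀ _ (ne_of_gt (blocksFun_pos L k))]

end VSeqAux

open VSeqAux

/-- For a nonincreasing nonnegative sequence `a` of length `d ≥ 1` and a composition `L`
of `d`, the sequence `v(L,a)` is nonincreasing and nonnegative, has the same weight as `a`,
and is dominated by `a`. -/
theorem vSeq_antitone_nonneg_weight_dominated (d : ℕ) (hd : 1 ≤ d) (a : Fin d → ℚ)
    (ha_mono : Antitone a) (ha_nonneg : ∀ i, 0 ≤ a i) (L : Composition d) :
    Antitone (vSeq L a) ∧ (∀ i, 0 ≤ vSeq L a i) ∧
      (∑ i, vSeq L a i) = (∑ i, a i) ∧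
      ∀ n : Fin d, (∑ i ∈ Finset.Iic n, vSeq L a i) ≤ (∑ i ∈ Finset.Iic n, a i) := by
  refine ⟨?_, ?_, ?_, ?_⟩
  · -- Antitone
    intro i j hij
    rcases eq_or_lt_of_le (index_mono L hij) with heq | hlt
    · rw [vSeq_eq, vSeq_eq, heq]
    · rw [vSeq_eq, vSeq_eq, div_le_div_iff₀ (blocksFun_pos L _) (blocksFun_pos L _)]
      rw [← card_F, ← card_F]
      have := cross a (F L (L.index i)) (F L (L.index j)) (fun p hp q hq => by
        refine ha_mono (le_of_lt (lt_of_index_lt L ?_))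
        rw [(mem_F L).1 hp, (mem_F L).1 hq]; exact hlt)
      linarith
  · -- Nonneg
    intro i
    rw [vSeq_eq]
    exact div_nonneg (Finset.sum_nonneg fun j _ => ha_nonneg j) (le_of_lt (blocksFun_pos L _))
  · -- Weight
    calc ∑ i, vSeq L a i = ∑ k : Fin L.length, ∑ j ∈ F L k, vSeq L a j := by
          exact (Finset.sum_fiberwise Finset.univ L.index (vSeq L a)).symm
      _ = ∑ k : Fin L.length, ∑ j ∈ F L k, a j := by
          exact Finset.sum_congr rfl fun k _ => sum_F_vSeq L a k
      _ = ∑ i, a i := Finset.sum_fiberwise Finset.univ L.index a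
  · -- Domination
    intro n
    set k := L.index n with hk
    have hsplit : ∀ g : Fin d → ℚ, ∑ i ∈ Finset.Iic n, g i =
        (∑ i ∈ Finset.univ.filter (fun j => L.index j < k), g i) +
        ∑ i ∈ (Finset.Iic n).filter (fun j => L.index j = k), g i := by
      intro g
      rw [← Finset.sum_union]
      · congr 1
        ext j
        simp only [Finset.mem_Iic, Finset.mem_union, Finset.mem_filter, Finset.mem_univ, true_and]
        constructor
        · intro hj
          rcases lt_or_eq_of_le (index_mono L hj) with h | h
          · exact Or.inl h
          · exact Or.inr ⟨hj, h⟩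
        · rintro (h | ⟨h, _⟩)
          · exact le_of_lt (lt_of_index_lt L h)
          · exact h
      · rw [Finset.disjoint_left]
        rintro j hj1 hj2
        rw [Finset.mem_filter] at hj1 hj2
        exact absurd hj2.2 (ne_of_lt hj1.2)
    rw [hsplit (vSeq L a), hsplit a]
    have hlow : ∑ i ∈ Finset.univ.filter (fun j => L.index j < k), vSeq L a i =
        ∑ i ∈ Finset.univ.filter (fun j => L.index j < k), a i := by
      have key : ∀ g : Fin d → ℚ, ∑ i ∈ Finset.univ.filter (fun j => L.index j < k), g i =
          ∑ k' ∈ Finset.Iio k, ∑ j ∈ F L k', g j := by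
        intro g
        rw [← Finset.sum_fiberwise_of_maps_to (t := Finset.Iio k)
          (fun j hj => Finset.mem_Iio.2 (Finset.mem_filter.1 hj).2) g]
        refine Finset.sum_congr rfl fun k' hk' => Finset.sum_congr ?_ (fun _ _ => rfl)
        ext j
        simp only [F, Finset.mem_filter, Finset.mem_univ, true_and]
        constructor
        · rintro ⟨_, h⟩; exact h
        · intro h; exact ⟨h ▸ Finset.mem_Iio.1 hk', h⟩
      rw [key (vSeq L a), key a]
      exact Finset.sum_congr rfl fun k' _ => sum_F_vSeq L a k'
    rw [hlow]
    refine add_le_add_right ?_ _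
    -- partial block part
    set P := (Finset.Iic n).filter (fun j => L.index j = k) with hP
    set Q := F L k \ P with hQ
    have hPsub : P ⊆ F L k := fun j hj => (mem_F L).2 (Finset.mem_filter.1 hj).2
    have hunion : F L k = P ∪ Q := by
      rw [hQ, Finset.union_sdiff_of_subset hPsub]
    have hdisj : Disjoint P Q := Finset.disjoint_sdiff
    have hsum : ∑ j ∈ F L k, a j = ∑ j ∈ P, a j + ∑ j ∈ Q, a j := by
      rw [hunion, Finset.sum_union hdisj]
    have hcard : (F L k).card = P.card + Q.card := by
      rw [hunion, Finset.card_union_of_disjoint hdisj]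
    have hcross := cross a P Q (fun p hp q hq => by
      refine ha_mono (le_of_lt ?_)
      have hq' := Finset.mem_sdiff.1 hq
      have hqk : L.index q = k := (mem_F L).1 hq'.1
      have hpn : p ≤ n := Finset.mem_Iic.1 (Finset.mem_filter.1 hp).1
      have hqn : ¬ q ≤ n := by
        intro hle
        exact hq'.2 (Finset.mem_filter.2 ⟨Finset.mem_Iic.2 hle, hqk⟩)
      exact lt_of_le_of_lt hpn (lt_of_not_ge hqn))
    have hvP : ∀ j ∈ P, vSeq L a j = (∑ j ∈ F L k, a j) / (L.blocksFun k : ℚ) := by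
      intro j hj
      rw [vSeq_eq, (Finset.mem_filter.1 hj).2]
    rw [Finset.sum_congr rfl hvP, Finset.sum_const, nsmul_eq_mul,
      ← mul_div_assoc, div_le_iff₀ (blocksFun_pos L k)]
    have hbl : (L.blocksFun k : ℚ) = (P.card : ℚ) + (Q.card : ℚ) := by
      rw [← card_F L k, hcard]; push_cast; ring
    rw [hsum, hbl]
    nlinarith [hcross]
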